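/- arXiv:2304.02555 — 3 statements merged into one kernel-verified Lean document; each statement's English description precedes it below -/
import Mathlib

section
/- Let X ⊆ {0,1}^n be nonempty. Then the number of subsets B ⊆ [n] shattered by X (i.e., sets B such that every function B → {0,1} arises as the restriction to B of the indicator of some x ∈ X) is at least |X|. -/
open Finset

/-- Pajor's strengthening of the Sauer–Shelah lemma: a nonempty set
`X ⊆ {0,1}^n` shatters at least `|X|` subsets of `[n]`. -/
theorem stmt0 (n : ℕ) (X : Finset (Fin n → Bool)) (hX : X.Nonempty) :
    X.card ≤ (Finset.univ.filter (fun B : Finset (Fin n) =>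
      ∀ a : Fin n → Bool, ∃ x ∈ X, ∀ i ∈ B, x i = a i)).card := by
  set f : (Fin n → Bool) → Finset (Fin n) := fun x => univ.filter (fun i => x i = true) with hf
  have hfinj : Function.Injective f := by
    intro x y hxy
    funext i
    have : (i ∈ f x) = (i ∈ f y) := by rw [hxy]
    simpa [hf, Finset.mem_filter] using this
  set 𝒜 := X.image f with h𝒜
  have h1 : X.card = 𝒜.card := (Finset.card_image_of_injective _ hfinj).symm
  have h2 : 𝒜.card ≤ 𝒜.shatterer.card := Finset.card_le_card_shatterer _
  have h3 : 𝒜.shatterer ⊆ (Finset.univ.filter (fun B : Finset (Fin n) =>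
      ∀ a : Fin n → Bool, ∃ x ∈ X, ∀ i ∈ B, x i = a i)) := by
    intro B hB
    rw [Finset.mem_shatterer] at hB
    rw [Finset.mem_filter]
    refine ⟨Finset.mem_univ _, fun a => ?_⟩
    obtain ⟨u, hu, huB⟩ := hB (Finset.filter_subset (fun i => a i = true) B)
    obtain ⟨x, hxX, rfl⟩ := Finset.mem_image.1 hu
    refine ⟨x, hxX, fun i hi => ?_⟩
    have : i ∈ B ∩ f x ↔ i ∈ B.filter (fun i => a i = true) := by rw [huB]
    simp only [Finset.mem_inter, Finset.mem_filter, hf, Finset.mem_univ, true_and] at this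
    by_cases hx : x i = true
    · rw [hx]; exact (this.1 ⟨hi, hx⟩).2.symm
    · have hxf : x i = false := by simpa using hx
      rw [hxf]
      cases h : a i
      · rfl
      · exact absurd (this.2 ⟨hi, h⟩).2 hx
  calc X.card = 𝒜.card := h1
    _ ≤ 𝒜.shatterer.card := h2
    _ ≤ _ := Finset.card_le_card h3
end

section
/- Let X be a random variable taking values in {0,1}^n with Shannon entropy H(X) ≥ n - k, where k ≥ 0. Then for every t with 1 ≤ t ≤ n and every δ > 0, if T is a uniformly random subset of [n] of size t, then with probability at least 1 - δ over T, the entropy of the marginal X_T satisfies H(X_T) ≥ t - kt/(δn). -/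
open Finset
open scoped Classical

/-- Shannon entropy (in bits) of a finitely supported distribution. -/
noncomputable def ent {α : Type*} [Fintype α] (p : α → ℝ) : ℝ :=
  ∑ a, -(p a * Real.logb 2 (p a))

/-- Marginal of a distribution on `{0,1}^n` onto the coordinates in `T`. -/
noncomputable def marg {n : ℕ} (p : (Fin n → Bool) → ℝ) (T : Finset (Fin n)) :
    ({i : Fin n // i ∈ T} → Bool) → ℝ :=
  fun a => ∑ x ∈ Finset.univ.filter
    (fun x : Fin n → Bool => ∀ i : {i : Fin n // i ∈ T}, x i.1 = a i), p x

namespace Stmt3Aux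

variable {n : ℕ}

/-- Mask a boolean vector outside `S`. -/
def mask (S : Finset (Fin n)) (x : Fin n → Bool) : Fin n → Bool :=
  fun i => if i ∈ S then x i else false

lemma mask_mask (S T : Finset (Fin n)) (x : Fin n → Bool) :
    mask S (mask T x) = mask (S ∩ T) x := by
  funext i
  by_cases hS : i ∈ S <;> by_cases hT : i ∈ T <;> simp [mask, hS, hT]

lemma mask_idem (S : Finset (Fin n)) (x : Fin n → Bool) :
    mask S (mask S x) = mask S x := by
  rw [mask_mask, Finset.inter_self]

lemma mask_mask_of_subset {S T : Finset (Fin n)} (h : S ⊆ T) (x : Fin n → Bool) :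
    mask S (mask T x) = mask S x := by
  rw [mask_mask, Finset.inter_eq_left.mpr h]

lemma mask_eq_iff {S : Finset (Fin n)} {x y : Fin n → Bool} :
    mask S x = mask S y ↔ ∀ i ∈ S, x i = y i := by
  constructor
  · intro h i hi
    have := congrFun h i
    simpa [mask, hi] using this
  · intro h
    funext i
    by_cases hi : i ∈ S <;> simp [mask, hi]
    exact h i hi

/-- The "fiber probability" of the `S`-marginal at `x`, expressed on the big cube. -/
noncomputable def qr (p : (Fin n → Bool) → ℝ) (S : Finset (Fin n)) (x : Fin n → Bool) : ℝ :=
  ∑ y ∈ univ.filter (fun y => mask S y = mask S x), p y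

/-- Canonical representatives of `S`-fibers. -/
def reps (S : Finset (Fin n)) : Finset (Fin n → Bool) :=
  univ.filter (fun z => mask S z = z)

lemma mem_reps {S : Finset (Fin n)} {z : Fin n → Bool} :
    z ∈ reps S ↔ mask S z = z := by simp [reps]

lemma qr_congr (p : (Fin n → Bool) → ℝ) {S : Finset (Fin n)} {x y : Fin n → Bool}
    (h : mask S x = mask S y) : qr p S x = qr p S y := by
  unfold qr; rw [h]

variable {p : (Fin n → Bool) → ℝ}

lemma qr_nonneg (hp0 : ∀ x, 0 ≤ p x) (S : Finset (Fin n)) (x : Fin n → Bool) :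
    0 ≤ qr p S x :=
  Finset.sum_nonneg fun y _ => hp0 y

lemma le_qr (hp0 : ∀ x, 0 ≤ p x) (S : Finset (Fin n)) (x : Fin n → Bool) :
    p x ≤ qr p S x := by
  apply Finset.single_le_sum (fun y _ => hp0 y)
  simp

lemma qr_anti (hp0 : ∀ x, 0 ≤ p x) {S T : Finset (Fin n)} (h : S ⊆ T) (x : Fin n → Bool) :
    qr p T x ≤ qr p S x := by
  apply Finset.sum_le_sum_of_subset_of_nonneg _ (fun y _ _ => hp0 y)
  intro y hy
  simp only [mem_filter, mem_univ, true_and] at hy ⊢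
  calc mask S y = mask S (mask T y) := (mask_mask_of_subset h y).symm
    _ = mask S (mask T x) := by rw [hy]
    _ = mask S x := mask_mask_of_subset h x

lemma qr_univ (x : Fin n → Bool) : qr p univ x = p x := by
  have hm : ∀ y : Fin n → Bool, mask univ y = y := by
    intro y; funext i; simp [mask]
  unfold qr
  rw [Finset.sum_eq_single_of_mem x (by simp [hm])]
  intro y hy hne
  exfalso; apply hne
  simpa [hm] using (mem_filter.mp hy).2

lemma qr_empty (x : Fin n → Bool) : qr p ∅ x = ∑ y, p y := by
  unfold qr
  congr 1
  apply Finset.filter_true_of_mem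
  intro y _
  funext i; simp [mask]

/-- Grouping a weighted sum of a `T`-measurable function into `T`-fibers. -/
lemma sum_fiber (p : (Fin n → Bool) → ℝ) (T : Finset (Fin n)) (R : (Fin n → Bool) → ℝ)
    (hR : ∀ x, R (mask T x) = R x) :
    ∑ x, p x * R x = ∑ z ∈ reps T, qr p T z * R z := by
  rw [← Finset.sum_fiberwise_of_maps_to (g := mask T) (t := reps T)
      (fun x _ => mem_reps.mpr (mask_idem T x)) (fun x => p x * R x)]
  apply Finset.sum_congr rfl
  intro z hz
  have hz' : mask T z = z := mem_reps.mp hz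
  have h1 : ∀ x ∈ univ.filter (fun x => mask T x = z), p x * R x = p x * R z := by
    intro x hx
    have hx' : mask T x = z := (mem_filter.mp hx).2
    rw [← hR x, hx']
  rw [Finset.sum_congr rfl h1, ← Finset.sum_mul]
  congr 1
  unfold qr
  apply Finset.sum_congr _ (fun _ _ => rfl)
  apply Finset.filter_congr
  intro x _
  rw [hz']

lemma sum_qr_reps (hp1 : ∑ x, p x = 1) (T : Finset (Fin n)) :
    ∑ z ∈ reps T, qr p T z = 1 := by
  have := sum_fiber p T (fun _ => 1) (fun _ => rfl)
  simpa [hp1] using this.symm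

/-- Tower property: the `S`-fiber mass is the sum of the `T`-fiber masses of the
representatives compatible with it, for `S ⊆ T`. -/
lemma tower {S T : Finset (Fin n)} (h : S ⊆ T) (x : Fin n → Bool) :
    qr p S x = ∑ z ∈ (reps T).filter (fun z => mask S z = mask S x), qr p T z := by
  have hmaps : ∀ y ∈ univ.filter (fun y => mask S y = mask S x),
      mask T y ∈ (reps T).filter (fun z => mask S z = mask S x) := by
    intro y hy
    have hy' : mask S y = mask S x := (mem_filter.mp hy).2
    rw [mem_filter]
    exact ⟨mem_reps.mpr (mask_idem T y), by rw [mask_mask_of_subset h, hy']⟩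
  have key := Finset.sum_fiberwise_of_maps_to (g := mask T) hmaps p
  rw [show qr p S x = ∑ y ∈ univ.filter (fun y => mask S y = mask S x), p y from rfl, ← key]
  apply Finset.sum_congr rfl
  intro z hz
  rw [mem_filter, mem_reps] at hz
  obtain ⟨hz1, hz2⟩ := hz
  unfold qr
  apply Finset.sum_congr _ (fun _ _ => rfl)
  ext y
  simp only [mem_filter, mem_univ, true_and]
  constructor
  · rintro ⟨-, h2⟩
    rw [h2, hz1]
  · intro hy
    have hyz : mask T y = z := by rw [hy, hz1]
    constructor
    · calc mask S y = mask S (mask T y) := (mask_mask_of_subset h y).symm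
        _ = mask S z := by rw [hyz]
        _ = mask S x := hz2
    · exact hyz

lemma rep_false {U : Finset (Fin n)} {z : Fin n → Bool} (h : mask U z = z)
    {i : Fin n} (hi : i ∉ U) : z i = false := by
  have := congrFun h i
  simpa [mask, hi] using this.symm

lemma mask_apply_mem {U : Finset (Fin n)} {z w : Fin n → Bool} (h : mask U z = w)
    {i : Fin n} (hi : i ∈ U) : z i = w i := by
  have := congrFun h i
  simpa [mask, hi] using this

/-- Fibers over the union split as products of fibers over the two parts. -/
lemma prodsplit (p : (Fin n → Bool) → ℝ) (S T : Finset (Fin n)) (w : Fin n → Bool)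
    (hw : mask (S ∩ T) w = w) :
    ∑ z ∈ (reps (S ∪ T)).filter (fun z => mask (S ∩ T) z = w), qr p S z * qr p T z
      = (∑ u ∈ (reps S).filter (fun u => mask (S ∩ T) u = w), qr p S u) *
        (∑ v ∈ (reps T).filter (fun v => mask (S ∩ T) v = w), qr p T v) := by
  rw [Finset.sum_mul_sum, ← Finset.sum_product']
  apply Finset.sum_nbij' (i := fun z => (mask S z, mask T z))
    (j := fun uv => fun idx => if idx ∈ S then uv.1 idx else uv.2 idx)
  · intro z hz
    rw [mem_filter, mem_reps] at hz
    obtain ⟨hz1, hz2⟩ := hz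
    rw [Finset.mem_product, mem_filter, mem_filter, mem_reps, mem_reps]
    refine ⟨⟨mask_idem S z, ?_⟩, mask_idem T z, ?_⟩
    · rw [mask_mask, Finset.inter_eq_left.mpr Finset.inter_subset_left, hz2]
    · rw [mask_mask, Finset.inter_eq_left.mpr Finset.inter_subset_right, hz2]
  · intro uv huv
    rw [Finset.mem_product, mem_filter, mem_filter, mem_reps, mem_reps] at huv
    obtain ⟨⟨hu, huw⟩, hv, hvw⟩ := huv
    rw [mem_filter, mem_reps]
    constructor
    · funext idx
      by_cases hS : idx ∈ S
      · simp [mask, hS]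
      · by_cases hT : idx ∈ T
        · simp [mask, hS, hT]
        · simp [mask, hS, hT, rep_false hv hT]
    · funext idx
      by_cases hST : idx ∈ S ∩ T
      · have hS : idx ∈ S := (Finset.mem_inter.mp hST).1
        simp only [mask, hST, if_pos, hS]
        exact mask_apply_mem huw hST
      · simp only [mask, hST, if_neg, if_false]
        exact (rep_false hw hST).symm
  · intro z hz
    rw [mem_filter, mem_reps] at hz
    obtain ⟨hz1, hz2⟩ := hz
    funext idx
    by_cases hS : idx ∈ S
    · simp [mask, hS]
    · by_cases hT : idx ∈ T
      · simp [mask, hS, hT]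
      · have : idx ∉ S ∪ T := by simp [hS, hT]
        simp [mask, hS, hT, rep_false hz1 this]
  · intro uv huv
    rw [Finset.mem_product, mem_filter, mem_filter, mem_reps, mem_reps] at huv
    obtain ⟨⟨hu, huw⟩, hv, hvw⟩ := huv
    refine Prod.ext ?_ ?_
    · funext idx
      by_cases hS : idx ∈ S
      · simp [mask, hS]
      · simp [mask, hS, rep_false hu hS]
    · funext idx
      by_cases hT : idx ∈ T
      · by_cases hS : idx ∈ S
        · have hST : idx ∈ S ∩ T := Finset.mem_inter.mpr ⟨hS, hT⟩
          have h1 : uv.1 idx = w idx := mask_apply_mem huw hST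
          have h2 : uv.2 idx = w idx := mask_apply_mem hvw hST
          simp [mask, hT, hS, h1, h2]
        · simp [mask, hT, hS]
      · simp [mask, hT, rep_false hv hT]
  · intro z hz
    rw [mul_comm (qr p S (mask S z))] at *
    rw [qr_congr p (mask_idem S z).symm, qr_congr p (mask_idem T z).symm]
    ring

/-- The key inequality behind submodularity of entropy. -/
lemma claimC (hp0 : ∀ x, 0 ≤ p x) (hp1 : ∑ x, p x = 1) (S T : Finset (Fin n)) :
    ∑ x, p x * (qr p S x * qr p T x / (qr p (S ∪ T) x * qr p (S ∩ T) x)) ≤ 1 := by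
  have hR : ∀ x, (qr p S (mask (S ∪ T) x) * qr p T (mask (S ∪ T) x) /
      (qr p (S ∪ T) (mask (S ∪ T) x) * qr p (S ∩ T) (mask (S ∪ T) x)))
      = qr p S x * qr p T x / (qr p (S ∪ T) x * qr p (S ∩ T) x) := by
    intro x
    rw [qr_congr p (mask_mask_of_subset Finset.subset_union_left x),
        qr_congr p (mask_mask_of_subset Finset.subset_union_right x),
        qr_congr p (mask_idem (S ∪ T) x),
        qr_congr p (mask_mask_of_subset (Finset.inter_subset_left.trans Finset.subset_union_left) x)]
  rw [sum_fiber p (S ∪ T) _ hR]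
  have step2 : ∀ z ∈ reps (S ∪ T),
      qr p (S ∪ T) z * (qr p S z * qr p T z / (qr p (S ∪ T) z * qr p (S ∩ T) z))
        ≤ qr p S z * qr p T z / qr p (S ∩ T) z := by
    intro z _
    rcases eq_or_lt_of_le (qr_nonneg hp0 (S ∪ T) z) with h0 | hpos
    · rw [← h0]
      rw [zero_mul]
      exact div_nonneg (mul_nonneg (qr_nonneg hp0 S z) (qr_nonneg hp0 T z))
        (qr_nonneg hp0 (S ∩ T) z)
    · rw [← mul_div_assoc, mul_div_mul_left _ _ (ne_of_gt hpos)]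
  refine le_trans (Finset.sum_le_sum step2) ?_
  have hmaps : ∀ z ∈ reps (S ∪ T), mask (S ∩ T) z ∈ reps (S ∩ T) :=
    fun z _ => mem_reps.mpr (mask_idem (S ∩ T) z)
  rw [← Finset.sum_fiberwise_of_maps_to (g := mask (S ∩ T)) hmaps
      (fun z => qr p S z * qr p T z / qr p (S ∩ T) z)]
  have hterm : ∀ w ∈ reps (S ∩ T),
      ∑ z ∈ (reps (S ∪ T)).filter (fun z => mask (S ∩ T) z = mask (S ∩ T) w),
        qr p S z * qr p T z / qr p (S ∩ T) z ≤ qr p (S ∩ T) w := by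
    intro w hw
    have hw' : mask (S ∩ T) w = w := mem_reps.mp hw
    have hcongr : ∀ z ∈ (reps (S ∪ T)).filter (fun z => mask (S ∩ T) z = mask (S ∩ T) w),
        qr p S z * qr p T z / qr p (S ∩ T) z = qr p S z * qr p T z / qr p (S ∩ T) w := by
      intro z hz
      rw [qr_congr p (mem_filter.mp hz).2]
    rw [Finset.sum_congr rfl hcongr, ← Finset.sum_div]
    have hfe : (reps (S ∪ T)).filter (fun z => mask (S ∩ T) z = mask (S ∩ T) w)
        = (reps (S ∪ T)).filter (fun z => mask (S ∩ T) z = w) := by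
      apply Finset.filter_congr; intro z _; rw [hw']
    rw [hfe, prodsplit p S T w hw']
    have h1 : (∑ u ∈ (reps S).filter (fun u => mask (S ∩ T) u = w), qr p S u)
        = qr p (S ∩ T) w := by
      rw [tower (Finset.inter_subset_left : S ∩ T ⊆ S) w]
      apply Finset.sum_congr _ (fun _ _ => rfl)
      apply Finset.filter_congr; intro z _; rw [hw']
    have h2 : (∑ v ∈ (reps T).filter (fun v => mask (S ∩ T) v = w), qr p T v)
        = qr p (S ∩ T) w := by
      rw [tower (Finset.inter_subset_right : S ∩ T ⊆ T) w]
      apply Finset.sum_congr _ (fun _ _ => rfl)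
      apply Finset.filter_congr; intro z _; rw [hw']
    rw [h1, h2]
    rcases eq_or_lt_of_le (qr_nonneg hp0 (S ∩ T) w) with h0 | hpos
    · rw [← h0]; simp
    · rw [mul_div_assoc, div_self (ne_of_gt hpos), mul_one]
  calc ∑ w ∈ reps (S ∩ T), ∑ z ∈ (reps (S ∪ T)).filter
          (fun z => mask (S ∩ T) z = w), qr p S z * qr p T z / qr p (S ∩ T) z
      ≤ ∑ w ∈ reps (S ∩ T), qr p (S ∩ T) w := by
        apply Finset.sum_le_sum
        intro w hw
        have := hterm w hw
        have hfe : (reps (S ∪ T)).filter (fun z => mask (S ∩ T) z = mask (S ∩ T) w)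
            = (reps (S ∪ T)).filter (fun z => mask (S ∩ T) z = w) := by
          apply Finset.filter_congr; intro z _; rw [mem_reps.mp hw]
        rwa [hfe] at this
    _ = 1 := sum_qr_reps hp1 (S ∩ T)

/-- The entropy of the `S`-marginal, written as a sum over the big cube. -/
noncomputable def fS (p : (Fin n → Bool) → ℝ) (S : Finset (Fin n)) : ℝ :=
  ∑ x, p x * (-Real.logb 2 (qr p S x))

/-- Submodularity of entropy. -/
lemma fS_submod (hp0 : ∀ x, 0 ≤ p x) (hp1 : ∑ x, p x = 1) (S T : Finset (Fin n)) :
    fS p (S ∪ T) + fS p (S ∩ T) ≤ fS p S + fS p T := by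
  set R : (Fin n → Bool) → ℝ :=
    fun x => qr p S x * qr p T x / (qr p (S ∪ T) x * qr p (S ∩ T) x) with hRdef
  have log2pos : (0:ℝ) < Real.log 2 := Real.log_pos (by norm_num)
  have key : ∀ x, p x * ((1 - R x) / Real.log 2)
      ≤ p x * (-Real.logb 2 (qr p S x)) + p x * (-Real.logb 2 (qr p T x))
        - (p x * (-Real.logb 2 (qr p (S ∪ T) x)) + p x * (-Real.logb 2 (qr p (S ∩ T) x))) := by
    intro x
    rcases eq_or_lt_of_le (hp0 x) with h0 | hpx
    · rw [← h0]; simp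
    · have hS : 0 < qr p S x := lt_of_lt_of_le hpx (le_qr hp0 S x)
      have hT : 0 < qr p T x := lt_of_lt_of_le hpx (le_qr hp0 T x)
      have hU : 0 < qr p (S ∪ T) x := lt_of_lt_of_le hpx (le_qr hp0 (S ∪ T) x)
      have hI : 0 < qr p (S ∩ T) x := lt_of_lt_of_le hpx (le_qr hp0 (S ∩ T) x)
      have hr : 0 < qr p (S ∪ T) x * qr p (S ∩ T) x / (qr p S x * qr p T x) :=
        div_pos (mul_pos hU hI) (mul_pos hS hT)
      have hRr : R x = (qr p (S ∪ T) x * qr p (S ∩ T) x / (qr p S x * qr p T x))⁻¹ := by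
        rw [hRdef]; field_simp
      have hlog : 1 - R x ≤ Real.log (qr p (S ∪ T) x * qr p (S ∩ T) x / (qr p S x * qr p T x)) := by
        have := Real.log_le_sub_one_of_pos (inv_pos.mpr hr)
        rw [Real.log_inv] at this
        rw [hRr]
        linarith
      have hcomb : -Real.logb 2 (qr p S x) + -Real.logb 2 (qr p T x)
          - (-Real.logb 2 (qr p (S ∪ T) x) + -Real.logb 2 (qr p (S ∩ T) x))
          = Real.log (qr p (S ∪ T) x * qr p (S ∩ T) x / (qr p S x * qr p T x)) / Real.log 2 := by
        rw [Real.log_div (by positivity) (by positivity), Real.log_mul (ne_of_gt hU) (ne_of_gt hI),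
          Real.log_mul (ne_of_gt hS) (ne_of_gt hT)]
        simp only [Real.logb]
        ring
      have hstep : p x * ((1 - R x) / Real.log 2) ≤ p x *
          (Real.log (qr p (S ∪ T) x * qr p (S ∩ T) x / (qr p S x * qr p T x)) / Real.log 2) := by
        apply mul_le_mul_of_nonneg_left _ (le_of_lt hpx)
        exact (div_le_div_iff_of_pos_right log2pos).mpr hlog
      calc p x * ((1 - R x) / Real.log 2) ≤ _ := hstep
        _ = p x * (-Real.logb 2 (qr p S x)) + p x * (-Real.logb 2 (qr p T x))
            - (p x * (-Real.logb 2 (qr p (S ∪ T) x)) + p x * (-Real.logb 2 (qr p (S ∩ T) x))) := by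
          rw [← hcomb]; ring
  have hsum : ∑ x, p x * ((1 - R x) / Real.log 2)
      ≤ ∑ x, (p x * (-Real.logb 2 (qr p S x)) + p x * (-Real.logb 2 (qr p T x))
        - (p x * (-Real.logb 2 (qr p (S ∪ T) x)) + p x * (-Real.logb 2 (qr p (S ∩ T) x)))) :=
    Finset.sum_le_sum (fun x _ => key x)
  have hlhs : 0 ≤ ∑ x, p x * ((1 - R x) / Real.log 2) := by
    have hre : ∑ x, p x * ((1 - R x) / Real.log 2) = (∑ x, (p x - p x * R x)) / Real.log 2 := by
      rw [Finset.sum_div]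
      apply Finset.sum_congr rfl
      intro x _; ring
    rw [hre]
    apply div_nonneg _ (le_of_lt log2pos)
    rw [Finset.sum_sub_distrib, hp1]
    have := claimC hp0 hp1 S T
    linarith
  have hrhs : ∑ x, (p x * (-Real.logb 2 (qr p S x)) + p x * (-Real.logb 2 (qr p T x))
        - (p x * (-Real.logb 2 (qr p (S ∪ T) x)) + p x * (-Real.logb 2 (qr p (S ∩ T) x))))
      = fS p S + fS p T - (fS p (S ∪ T) + fS p (S ∩ T)) := by
    rw [Finset.sum_sub_distrib, Finset.sum_add_distrib, Finset.sum_add_distrib]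
    rfl
  rw [hrhs] at hsum
  linarith

/-- restriction map -/
def restr (S : Finset (Fin n)) (x : Fin n → Bool) : {i : Fin n // i ∈ S} → Bool :=
  fun i => x i.1

lemma marg_restr (S : Finset (Fin n)) (x : Fin n → Bool) :
    marg p S (restr S x) = qr p S x := by
  unfold marg qr
  apply Finset.sum_congr _ (fun _ _ => rfl)
  apply Finset.filter_congr
  intro y _
  rw [mask_eq_iff]
  constructor
  · intro h i hi; exact h ⟨i, hi⟩
  · intro h i; exact h i.1 i.2

lemma marg_eq_sum_restr (S : Finset (Fin n)) (a : {i : Fin n // i ∈ S} → Bool) :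
    marg p S a = ∑ x ∈ univ.filter (fun x => restr S x = a), p x := by
  unfold marg
  apply Finset.sum_congr _ (fun _ _ => rfl)
  apply Finset.filter_congr
  intro y _
  constructor
  · intro h; funext i; exact h i
  · intro h i; exact congrFun h i

lemma marg_nonneg (hp0 : ∀ x, 0 ≤ p x) (S : Finset (Fin n))
    (a : {i : Fin n // i ∈ S} → Bool) : 0 ≤ marg p S a :=
  Finset.sum_nonneg fun y _ => hp0 y

lemma marg_sum_one (hp1 : ∑ x, p x = 1) (S : Finset (Fin n)) :
    ∑ a, marg p S a = 1 := by
  have key := Finset.sum_fiberwise_of_maps_to (s := (univ : Finset (Fin n → Bool)))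
    (t := (univ : Finset ({i : Fin n // i ∈ S} → Bool))) (g := restr S)
    (fun x _ => mem_univ _) p
  rw [← hp1, ← key]
  apply Finset.sum_congr rfl
  intro a _
  rw [marg_eq_sum_restr]

lemma ent_marg_eq (S : Finset (Fin n)) : ent (marg p S) = fS p S := by
  unfold fS
  have h1 : ∀ x : Fin n → Bool,
      p x * (-Real.logb 2 (qr p S x)) = p x * (-Real.logb 2 (marg p S (restr S x))) := by
    intro x; rw [marg_restr]
  have key := Finset.sum_fiberwise_of_maps_to (s := (univ : Finset (Fin n → Bool)))
    (t := (univ : Finset ({i : Fin n // i ∈ S} → Bool))) (g := restr S)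
    (fun x _ => mem_univ _) (fun x => p x * (-Real.logb 2 (marg p S (restr S x))))
  rw [Finset.sum_congr rfl (fun x _ => h1 x), ← key]
  unfold ent
  apply Finset.sum_congr rfl
  intro a _
  have h2 : ∀ x ∈ univ.filter (fun x => restr S x = a),
      p x * (-Real.logb 2 (marg p S (restr S x))) = p x * (-Real.logb 2 (marg p S a)) := by
    intro x hx
    rw [(mem_filter.mp hx).2]
  rw [Finset.sum_congr rfl h2, ← Finset.sum_mul, ← marg_eq_sum_restr]
  ring

/-- Maximum-entropy bound. -/
lemma ent_le_logb_card {α : Type*} [Fintype α] (m : α → ℝ)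
    (h0 : ∀ a, 0 ≤ m a) (h1 : ∑ a, m a = 1) :
    ent m ≤ Real.logb 2 (Fintype.card α) := by
  have hne : Nonempty α := by
    by_contra h
    rw [not_nonempty_iff] at h
    rw [Finset.univ_eq_empty, Finset.sum_empty] at h1
    norm_num at h1
  have hN : (0:ℝ) < (Fintype.card α : ℝ) := by
    have := Fintype.card_pos_iff.mpr hne
    exact_mod_cast this
  set N : ℝ := (Fintype.card α : ℝ) with hNdef
  have log2pos : (0:ℝ) < Real.log 2 := Real.log_pos (by norm_num)
  have key : ∀ a, -(m a * Real.logb 2 (m a)) - m a * Real.logb 2 N ≤ (1/N - m a) / Real.log 2 := by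
    intro a
    rcases eq_or_lt_of_le (h0 a) with h | h
    · rw [← h]
      simp only [zero_mul, neg_zero, mul_zero, sub_zero, zero_sub, neg_zero, mul_zero]
      positivity
    · have hmN : 0 < m a * N := mul_pos h hN
      have hlog : 1 - 1/(m a * N) ≤ Real.log (m a * N) := by
        have := Real.log_le_sub_one_of_pos (show (0:ℝ) < (m a * N)⁻¹ by positivity)
        rw [Real.log_inv] at this
        rw [sub_le_iff_le_add, one_div]
        linarith
      have hsplit : -(m a * Real.logb 2 (m a)) - m a * Real.logb 2 N
          = (-(m a * Real.log (m a * N))) / Real.log 2 := by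
        rw [Real.log_mul (ne_of_gt h) (ne_of_gt hN)]
        simp only [Real.logb]
        ring
      rw [hsplit]
      apply div_le_div_of_nonneg_right _ (le_of_lt log2pos)
      have h2 : m a * (1 - 1/(m a * N)) ≤ m a * Real.log (m a * N) :=
        mul_le_mul_of_nonneg_left hlog (le_of_lt h)
      have h3 : m a * (1 - 1/(m a * N)) = m a - 1/N := by
        field_simp
      linarith
  calc ent m = ∑ a, (-(m a * Real.logb 2 (m a)) - m a * Real.logb 2 N) + Real.logb 2 N := by
        unfold ent
        rw [Finset.sum_sub_distrib, ← Finset.sum_mul, h1, one_mul]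
        ring
    _ ≤ ∑ a, ((1/N - m a) / Real.log 2) + Real.logb 2 N := by
        refine add_le_add ?_ le_rfl
        exact Finset.sum_le_sum (fun a _ => key a)
    _ = Real.logb 2 N := by
        have hzero : ∑ a, ((1/N - m a) / Real.log 2) = 0 := by
          rw [← Finset.sum_div, Finset.sum_sub_distrib, h1, Finset.sum_const, Finset.card_univ]
          rw [nsmul_eq_mul, ← hNdef]
          field_simp
          ring
        rw [hzero, zero_add]

lemma fS_le (hp0 : ∀ x, 0 ≤ p x) (hp1 : ∑ x, p x = 1) (T : Finset (Fin n)) :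
    fS p T ≤ (T.card : ℝ) := by
  rw [← ent_marg_eq]
  calc ent (marg p T) ≤ Real.logb 2 (Fintype.card ({i : Fin n // i ∈ T} → Bool)) :=
        ent_le_logb_card _ (marg_nonneg hp0 T) (marg_sum_one hp1 T)
    _ = (T.card : ℝ) := by
        rw [Fintype.card_fun, Fintype.card_bool, Fintype.card_coe]
        push_cast
        rw [Real.logb_pow]
        rw [Real.logb_self_eq_one (by norm_num)]
        ring

lemma fS_univ : fS p (univ : Finset (Fin n)) = ent p := by
  unfold fS ent
  apply Finset.sum_congr rfl
  intro x _
  rw [qr_univ]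
  ring

lemma fS_empty (hp1 : ∑ x, p x = 1) : fS p (∅ : Finset (Fin n)) = 0 := by
  unfold fS
  apply Finset.sum_eq_zero
  intro x _
  rw [qr_empty, hp1]
  simp

lemma count_mem (i : Fin n) (t : ℕ) (ht : 1 ≤ t) :
    (((powersetCard t (univ : Finset (Fin n)))).filter (fun T => i ∈ T)).card
      = (n - 1).choose (t - 1) := by
  have h1 : ((univ : Finset (Fin n)).erase i).card = n - 1 := by
    rw [card_erase_of_mem (mem_univ i), card_univ, Fintype.card_fin]
  rw [← h1, ← Finset.card_powersetCard]
  apply Finset.card_nbij' (i := fun T => T.erase i) (j := fun T' => insert i T')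
  · intro T hT
    simp only [Finset.mem_coe] at hT ⊢
    rw [mem_filter, mem_powersetCard] at hT
    obtain ⟨⟨hsub, hcard⟩, hmem⟩ := hT
    rw [mem_powersetCard]
    exact ⟨erase_subset_erase i hsub, by rw [card_erase_of_mem hmem, hcard]⟩
  · intro T' hT'
    simp only [Finset.mem_coe] at hT' ⊢
    rw [mem_powersetCard] at hT'
    obtain ⟨hsub, hcard⟩ := hT'
    have hni : i ∉ T' := fun h => (notMem_erase i univ) (hsub h)
    rw [mem_filter, mem_powersetCard]
    refine ⟨⟨subset_univ _, ?_⟩, mem_insert_self i T'⟩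
    rw [card_insert_of_notMem hni, hcard]
    omega
  · intro T hT
    rw [Finset.mem_coe] at hT
    rw [mem_filter] at hT
    exact insert_erase hT.2
  · intro T' hT'
    rw [Finset.mem_coe] at hT'
    rw [mem_powersetCard] at hT'
    have hni : i ∉ T' := fun h => (notMem_erase i univ) (hT'.1 h)
    exact erase_insert hni

lemma swap_sum (t : ℕ) (ht : 1 ≤ t) (d : Fin n → ℝ) :
    ∑ T ∈ powersetCard t (univ : Finset (Fin n)), ∑ i ∈ T, d i
      = ((n - 1).choose (t - 1) : ℝ) * ∑ i, d i := by
  have h1 : ∀ T ∈ powersetCard t (univ : Finset (Fin n)),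
      ∑ i ∈ T, d i = ∑ i : Fin n, if i ∈ T then d i else 0 := by
    intro T _
    rw [Finset.sum_ite_mem]
    congr 1
    rw [Finset.univ_inter]
  rw [Finset.sum_congr rfl h1, Finset.sum_comm]
  rw [Finset.mul_sum]
  apply Finset.sum_congr rfl
  intro i _
  rw [Finset.sum_ite, Finset.sum_const_zero, add_zero, Finset.sum_const, count_mem i t ht]
  simp [nsmul_eq_mul]

/-- prefix sets -/
def pre (n : ℕ) (j : ℕ) : Finset (Fin n) := univ.filter (fun i => (i : ℕ) < j)

noncomputable def dd (p : (Fin n → Bool) → ℝ) (i : Fin n) : ℝ :=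
  fS p (pre n ((i : ℕ) + 1)) - fS p (pre n (i : ℕ))

lemma pre_zero : pre n 0 = ∅ := by
  ext i; simp [pre]

lemma pre_top : pre n n = univ := by
  ext i; simp [pre, i.isLt]

lemma pre_succ {j : ℕ} (hj : j < n) :
    pre n (j + 1) = insert ⟨j, hj⟩ (pre n j) := by
  ext i
  simp only [pre, mem_filter, mem_univ, true_and, mem_insert]
  constructor
  · intro h
    rcases Nat.lt_succ_iff_lt_or_eq.mp h with h' | h'
    · exact Or.inr h'
    · exact Or.inl (Fin.ext h')
  · rintro (rfl | h)
    · exact Nat.lt_succ_self j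
    · exact Nat.lt_succ_of_lt h

lemma telescope (hp1 : ∑ x, p x = 1) :
    ∑ i : Fin n, dd p i = fS p (univ : Finset (Fin n)) := by
  have hr : ∑ i : Fin n, dd p i
      = ∑ j ∈ Finset.range n, (fS p (pre n (j + 1)) - fS p (pre n j)) := by
    exact Fin.sum_univ_eq_sum_range (fun j => fS p (pre n (j + 1)) - fS p (pre n j)) n
  rw [hr, Finset.sum_range_sub (fun j => fS p (pre n j)), pre_zero, pre_top,
    fS_empty hp1, sub_zero]

lemma fS_ge_sum (hp0 : ∀ x, 0 ≤ p x) (hp1 : ∑ x, p x = 1) (T : Finset (Fin n)) :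
    ∑ i ∈ T, dd p i ≤ fS p T := by
  have claim : ∀ j : ℕ, ∑ i ∈ T.filter (fun i => i.val < j), dd p i
      ≤ fS p (T.filter (fun i => i.val < j)) := by
    intro j
    induction j with
    | zero =>
      have h : T.filter (fun i => i.val < 0) = ∅ := by
        ext i; simp
      rw [h, Finset.sum_empty, fS_empty hp1]
    | succ j ih =>
      by_cases hj : j < n
      · set i0 : Fin n := ⟨j, hj⟩ with hi0
        by_cases hiT : i0 ∈ T
        · have hset : T.filter (fun i => i.val < j + 1)
              = insert i0 (T.filter (fun i => i.val < j)) := by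
            ext i
            simp only [mem_filter, mem_insert]
            constructor
            · rintro ⟨hT, hlt⟩
              rcases Nat.lt_succ_iff_lt_or_eq.mp hlt with h' | h'
              · exact Or.inr ⟨hT, h'⟩
              · exact Or.inl (Fin.ext h')
            · rintro (rfl | ⟨hT, hlt⟩)
              · exact ⟨hiT, Nat.lt_succ_self j⟩
              · exact ⟨hT, Nat.lt_succ_of_lt hlt⟩
          have hnot : i0 ∉ T.filter (fun i => i.val < j) := by
            simp [hi0]
          have hU : insert i0 (T.filter (fun i => i.val < j)) ∪ pre n j = pre n (j + 1) := by
            rw [pre_succ hj, insert_union]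
            congr 1
            apply Finset.union_eq_right.mpr
            intro i hi
            rw [mem_filter] at hi
            simp [pre, hi.2]
          have hI : insert i0 (T.filter (fun i => i.val < j)) ∩ pre n j
              = T.filter (fun i => i.val < j) := by
            ext i
            simp only [mem_inter, mem_insert, mem_filter, pre, mem_univ, true_and]
            constructor
            · rintro ⟨rfl | ⟨hT, hlt⟩, hpre⟩
              · exact absurd hpre (by simp [hi0])
              · exact ⟨hT, hlt⟩
            · rintro ⟨hT, hlt⟩
              exact ⟨Or.inr ⟨hT, hlt⟩, hlt⟩
          have hsub := fS_submod hp0 hp1 (insert i0 (T.filter (fun i => i.val < j))) (pre n j)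
          rw [hU, hI] at hsub
          rw [hset, Finset.sum_insert hnot]
          have hd : dd p i0 = fS p (pre n (j + 1)) - fS p (pre n j) := rfl
          linarith
        · have hset : T.filter (fun i => i.val < j + 1)
              = T.filter (fun i => i.val < j) := by
            apply Finset.filter_congr
            intro i hiT'
            constructor
            · intro h
              rcases Nat.lt_succ_iff_lt_or_eq.mp h with h' | h'
              · exact h'
              · exact absurd hiT' (by rw [show i = i0 from Fin.ext h']; exact hiT)
            · exact Nat.lt_succ_of_lt
          rw [hset]
          exact ih
      · have hset : T.filter (fun i => i.val < j + 1)
            = T.filter (fun i => i.val < j) := by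
          apply Finset.filter_congr
          intro i _
          have h1 : i.val < j := lt_of_lt_of_le i.isLt (le_of_not_gt hj)
          constructor
          · intro _; exact h1
          · intro _; exact Nat.lt_succ_of_lt h1
        rw [hset]
        exact ih
  have hfin := claim n
  have hT : T.filter (fun i => i.val < n) = T :=
    Finset.filter_true_of_mem (fun i _ => i.isLt)
  rwa [hT] at hfin

/-- Shearer's inequality for the family of all `t`-subsets. -/
lemma shearer (hp0 : ∀ x, 0 ≤ p x) (hp1 : ∑ x, p x = 1) (t : ℕ) (ht : 1 ≤ t) :
    ((n - 1).choose (t - 1) : ℝ) * fS p (univ : Finset (Fin n))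
      ≤ ∑ T ∈ powersetCard t (univ : Finset (Fin n)), fS p T := by
  rw [← telescope hp1, ← swap_sum t ht (dd p)]
  exact Finset.sum_le_sum (fun T _ => fS_ge_sum hp0 hp1 T)

end Stmt3Aux

open Stmt3Aux in
/-- If `H(X) ≥ n - k` then for a uniformly random `t`-subset `T` of `[n]`,
with probability at least `1 - δ` we have `H(X_T) ≥ t - kt/(δn)`. -/
theorem stmt3 (n : ℕ) (p : (Fin n → Bool) → ℝ)
    (hp0 : ∀ x, 0 ≤ p x) (hp1 : ∑ x, p x = 1)
    (k : ℝ) (hk : 0 ≤ k) (hent : (n : ℝ) - k ≤ ent p)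
    (t : ℕ) (ht1 : 1 ≤ t) (htn : t ≤ n) (δ : ℝ) (hδ : 0 < δ) :
    (1 - δ) * (n.choose t) ≤
      (((Finset.powersetCard t (Finset.univ : Finset (Fin n))).filter
        (fun T => (t : ℝ) - k * t / (δ * n) ≤ ent (marg p T))).card : ℝ) := by
  have hn : 1 ≤ n := le_trans ht1 htn
  have hn0 : (0:ℝ) < n := by exact_mod_cast hn
  have ht0 : (0:ℝ) < t := by exact_mod_cast ht1
  set P := Finset.powersetCard t (Finset.univ : Finset (Fin n)) with hP
  set good : Finset (Fin n) → Prop := fun T => (t : ℝ) - k * t / (δ * n) ≤ ent (marg p T)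
    with hgood
  set N : ℕ := n.choose t with hN
  set C : ℕ := (n - 1).choose (t - 1) with hC
  have hPcard : P.card = N := by
    rw [hP, Finset.card_powersetCard, card_univ, Fintype.card_fin]
  have hTcard : ∀ T ∈ P, T.card = t := fun T hT => (Finset.mem_powersetCard.mp hT).2
  have hid : n * C = N * t := by
    rw [hN, hC]
    have h := Nat.add_one_mul_choose_eq (n - 1) (t - 1)
    have e1 : n - 1 + 1 = n := by omega
    have e2 : t - 1 + 1 = t := by omega
    rw [e1, e2] at h
    exact h
  have hidR : (n:ℝ) * C = (N:ℝ) * t := by exact_mod_cast hid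
  have hub : ∑ T ∈ P, ((t:ℝ) - fS p T) ≤ (C:ℝ) * k := by
    rw [Finset.sum_sub_distrib, Finset.sum_const, hPcard, nsmul_eq_mul]
    have h1 : (C:ℝ) * ((n:ℝ) - k) ≤ ∑ T ∈ P, fS p T := by
      calc (C:ℝ) * ((n:ℝ) - k) ≤ (C:ℝ) * ent p := by
            apply mul_le_mul_of_nonneg_left hent (by positivity)
        _ = (C:ℝ) * fS p (univ : Finset (Fin n)) := by rw [fS_univ]
        _ ≤ ∑ T ∈ P, fS p T := shearer hp0 hp1 t ht1
    nlinarith [hidR]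
  have hnonneg : ∀ T ∈ P, (0:ℝ) ≤ (t:ℝ) - fS p T := by
    intro T hT
    have := fS_le hp0 hp1 T
    rw [hTcard T hT] at this
    linarith
  set B := P.filter (fun T => ¬ good T) with hB
  set G := P.filter good with hG
  have hGB : G.card + B.card = N := by
    rw [hG, hB, Finset.card_filter_add_card_filter_not, hPcard]
  have hbad : ∀ T ∈ B, k * t / (δ * n) < (t:ℝ) - fS p T := by
    intro T hT
    have h2 : ¬ good T := (Finset.mem_filter.mp hT).2
    rw [hgood] at h2
    push_neg at h2
    rw [ent_marg_eq] at h2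
    linarith
  have hBP : B ⊆ P := Finset.filter_subset _ _
  have hsumB : ∑ T ∈ B, ((t:ℝ) - fS p T) ≤ ∑ T ∈ P, ((t:ℝ) - fS p T) :=
    Finset.sum_le_sum_of_subset_of_nonneg hBP (fun T hT _ => hnonneg T hT)
  have hlowB : (B.card : ℝ) * (k * t / (δ * n)) ≤ ∑ T ∈ B, ((t:ℝ) - fS p T) := by
    have := Finset.card_nsmul_le_sum B (fun T => (t:ℝ) - fS p T) (k * t / (δ * n))
      (fun T hT => le_of_lt (hbad T hT))
    rwa [nsmul_eq_mul] at this
  have hBbound : (B.card : ℝ) ≤ δ * N := by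
    by_cases hk0 : k = 0
    · have hBempty : B = ∅ := by
        by_contra hne
        obtain ⟨T₀, hT₀⟩ := Finset.nonempty_of_ne_empty hne
        have h1 := hbad T₀ hT₀
        rw [hk0] at h1
        simp only [zero_mul, zero_div] at h1
        have h2 : (t:ℝ) - fS p T₀ ≤ ∑ T ∈ P, ((t:ℝ) - fS p T) :=
          Finset.single_le_sum hnonneg (hBP hT₀)
        rw [hk0] at hub
        simp only [mul_zero] at hub
        linarith
      rw [hBempty]
      simp only [Finset.card_empty, Nat.cast_zero]
      positivity
    · have hkpos : 0 < k := lt_of_le_of_ne hk (Ne.symm hk0)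
      have hdn : (0:ℝ) < δ * n := by positivity
      have hM : (B.card : ℝ) * (k * t) / (δ * n) ≤ (C:ℝ) * k := by
        rw [mul_div_assoc]
        exact le_trans hlowB (le_trans hsumB hub)
      rw [div_le_iff₀ hdn] at hM
      have hCk : (C:ℝ) * k * (δ * n) = δ * (N:ℝ) * (k * t) := by
        have hcn : (C:ℝ) * n = (N:ℝ) * t := by linarith [hidR]
        linear_combination (k * δ) * hcn
      rw [hCk] at hM
      have hkt : (0:ℝ) < k * t := by positivity
      nlinarith
  have hGcast : (G.card : ℝ) = (N:ℝ) - B.card := by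
    have : (G.card : ℝ) + B.card = N := by exact_mod_cast hGB
    linarith
  have hgoal : ((P.filter good).card : ℝ) = (G.card : ℝ) := by rw [hG]
  rw [hgoal.symm] at hGcast
  calc (1 - δ) * (N:ℝ) = (N:ℝ) - δ * N := by ring
    _ ≤ (N:ℝ) - B.card := by linarith
    _ = ((P.filter good).card : ℝ) := hGcast.symm
end

section
/- Let 𝒜 be a downward-closed family of subsets of a 10r-element set U, with |𝒜| ≥ 2^{10r - c}. Let τ be the fraction of r-element subsets of U that belong to 𝒜. Then |𝒜| ≤ Σ_{i=0}^{r-1} C(10r, i) + τ · 2^{10r}, and hence τ ≥ 2^{-c} - 2^{-5r} ≥ 1 - c·ln 2 - 2^{-5r}. -/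
open Finset

lemma aux_natbound (r : ℕ) : ∑ i ∈ Finset.range r, (10 * r).choose i ≤ 2 ^ (5 * r) := by
  have h2 : ∑ i ∈ Finset.range (10 * r + 1), (10 * r).choose i * 9 ^ (10 * r - i)
      = 10 ^ (10 * r) := by
    have := add_pow 1 9 (10 * r) (R := ℕ)
    simp only [one_pow, one_mul, Nat.cast_id] at this
    rw [show (10:ℕ) = 1 + 9 by norm_num, this]
    exact Finset.sum_congr rfl fun i _ => mul_comm _ _
  have h1 : (∑ i ∈ Finset.range r, (10 * r).choose i) * 9 ^ (9 * r + 1)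
      ≤ 10 ^ (10 * r) := by
    rw [← h2, Finset.sum_mul]
    calc ∑ i ∈ Finset.range r, (10 * r).choose i * 9 ^ (9 * r + 1)
        ≤ ∑ i ∈ Finset.range r, (10 * r).choose i * 9 ^ (10 * r - i) :=
          Finset.sum_le_sum fun i hi => Nat.mul_le_mul_left _
            (Nat.pow_le_pow_right (by norm_num) (by simp only [Finset.mem_range] at hi; omega))
      _ ≤ _ := Finset.sum_le_sum_of_subset (Finset.range_subset_range.2 (by omega))
  have h3 : 10 ^ (10 * r) ≤ 2 ^ (5 * r) * 9 ^ (9 * r + 1) := by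
    calc (10:ℕ) ^ (10 * r) = (10 ^ 10) ^ r := by rw [← pow_mul, mul_comm]
      _ ≤ (2 ^ 5 * 9 ^ 9) ^ r := Nat.pow_le_pow_left (by norm_num) r
      _ = 2 ^ (5 * r) * 9 ^ (9 * r) := by rw [mul_pow, ← pow_mul, ← pow_mul, mul_comm 5, mul_comm 9]
      _ ≤ 2 ^ (5 * r) * 9 ^ (9 * r + 1) := by
          exact Nat.mul_le_mul_left _ (Nat.pow_le_pow_right (by norm_num) (by omega))
  exact Nat.le_of_mul_le_mul_right (h1.trans h3) (by positivity)

/-- For a downward-closed family `𝒜` over a `10r`-element universe with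
`|𝒜| ≥ 2^{10r-c}`, the fraction `τ` of `r`-subsets lying in `𝒜` satisfies
`|𝒜| ≤ Σ_{i<r} C(10r,i) + τ·2^{10r}`, hence
`τ ≥ 2^{-c} - 2^{-5r} ≥ 1 - c·ln 2 - 2^{-5r}`. -/
theorem stmt13 (r : ℕ) (hr : 1 ≤ r) (U : Type*) [Fintype U] [DecidableEq U]
    (hU : Fintype.card U = 10 * r)
    (𝒜 : Finset (Finset U)) (hdc : ∀ S T : Finset U, S ⊆ T → T ∈ 𝒜 → S ∈ 𝒜)
    (c : ℝ) (h𝒜 : (2 : ℝ) ^ ((10 * r : ℝ) - c) ≤ (𝒜.card : ℝ))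
    (τ : ℝ)
    (hτ : τ = (((Finset.powersetCard r (Finset.univ : Finset U)).filter
      (fun A => A ∈ 𝒜)).card : ℝ) / ((10 * r).choose r)) :
    (𝒜.card : ℝ) ≤ (∑ i ∈ Finset.range r, ((10 * r).choose i) : ℝ) + τ * 2 ^ (10 * r) ∧
    (2 : ℝ) ^ (-c) - 2 ^ (-(5 * r : ℝ)) ≤ τ ∧
    1 - c * Real.log 2 - 2 ^ (-(5 * r : ℝ)) ≤ (2 : ℝ) ^ (-c) - 2 ^ (-(5 * r : ℝ)) := by
  -- τ as slice density
  have hslice : (Finset.powersetCard r (Finset.univ : Finset U)).filter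
      (fun A => A ∈ 𝒜) = 𝒜 # r := by
    ext A
    simp only [mem_filter, mem_powersetCard, mem_slice]
    exact ⟨fun ⟨⟨_, h2⟩, h3⟩ => ⟨h3, h2⟩, fun ⟨h1, h2⟩ => ⟨⟨subset_univ _, h2⟩, h1⟩⟩
  rw [hslice] at hτ
  -- density function
  set d : ℕ → ℝ := fun k => ((𝒜 # k).card : ℝ) / ((10 * r).choose k) with hd
  have hτd : τ = d r := hτ
  -- one-step monotonicity
  have hstep : ∀ k : ℕ, d (k + 1) ≤ d k := by
    intro k
    have hshadow : Finset.shadow (𝒜 # (k + 1)) ⊆ 𝒜 # k := by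
      intro s hs
      rw [Finset.mem_shadow_iff] at hs
      obtain ⟨t, ht, a, ha, rfl⟩ := hs
      rw [mem_slice] at ht ⊢
      exact ⟨hdc _ _ (erase_subset _ _) ht.1, by rw [card_erase_of_mem ha, ht.2]; rfl⟩
    have hlym := Finset.card_div_choose_le_card_shadow_div_choose (𝕜 := ℝ)
      (Nat.succ_ne_zero k) (Finset.sized_slice (𝒜 := 𝒜) (r := k + 1))
    rw [hU] at hlym
    simp only [Nat.succ_sub_one] at hlym
    refine hlym.trans (div_le_div_of_nonneg_right ?_ ?_)
    · exact_mod_cast Finset.card_le_card hshadow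
    · exact Nat.cast_nonneg _
  -- monotonicity from r upward
  have hmono : ∀ k : ℕ, r ≤ k → d k ≤ τ := by
    intro k hk
    rw [hτd]
    induction k with
    | zero => omega
    | succ n ih =>
      rcases eq_or_lt_of_le hk with h | h
      · rw [← h]
      · exact (hstep n).trans (ih (by omega))
  have hτ0 : 0 ≤ τ := by rw [hτ]; positivity
  -- part 1
  have hsum : (𝒜.card : ℝ) ≤ (∑ i ∈ Finset.range r, ((10 * r).choose i) : ℝ)
      + τ * 2 ^ (10 * r) := by
    have hcards := Finset.sum_card_slice (𝒜 := 𝒜)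
    rw [hU] at hcards
    rw [← hcards]
    have hIic : Finset.Iic (10 * r) = Finset.range (10 * r + 1) := by
      ext x; simp [Nat.lt_succ_iff]
    rw [hIic]
    push_cast
    rw [Finset.range_eq_Ico, ← Finset.sum_Ico_consecutive (fun k => ((𝒜 # k).card : ℝ))
      (Nat.zero_le r) (by omega : r ≤ 10 * r + 1), ← Finset.range_eq_Ico]
    have hpart1 : ∑ k ∈ Finset.range r, ((𝒜 # k).card : ℝ)
        ≤ ∑ i ∈ Finset.range r, ((10 * r).choose i : ℝ) := by
      refine Finset.sum_le_sum fun k _ => ?_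
      have := Set.Sized.card_le (Finset.sized_slice (𝒜 := 𝒜) (r := k))
      rw [hU] at this
      exact_mod_cast this
    have hpart2 : ∑ k ∈ Finset.Ico r (10 * r + 1), ((𝒜 # k).card : ℝ)
        ≤ τ * 2 ^ (10 * r) := by
      calc ∑ k ∈ Finset.Ico r (10 * r + 1), ((𝒜 # k).card : ℝ)
          ≤ ∑ k ∈ Finset.Ico r (10 * r + 1), τ * ((10 * r).choose k : ℝ) := by
            refine Finset.sum_le_sum fun k hk => ?_
            simp only [Finset.mem_Ico] at hk
            have hch : (0:ℝ) < ((10 * r).choose k : ℝ) := by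
              exact_mod_cast Nat.choose_pos (by omega : k ≤ 10 * r)
            have := hmono k hk.1
            rw [hd] at this
            rw [div_le_iff₀ hch] at this
            linarith [this]
        _ = τ * ∑ k ∈ Finset.Ico r (10 * r + 1), ((10 * r).choose k : ℝ) := by
            rw [Finset.mul_sum]
        _ ≤ τ * 2 ^ (10 * r) := by
            refine mul_le_mul_of_nonneg_left ?_ hτ0
            have h1 : ∑ k ∈ Finset.Ico r (10 * r + 1), (10 * r).choose k
                ≤ ∑ k ∈ Finset.range (10 * r + 1), (10 * r).choose k :=
              Finset.sum_le_sum_of_subset (fun x hx => by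
                simp only [Finset.mem_Ico, Finset.mem_range] at hx ⊢; omega)
            rw [Nat.sum_range_choose] at h1
            exact_mod_cast h1
    linarith
  refine ⟨hsum, ?_, ?_⟩
  · -- τ ≥ 2^{-c} - 2^{-5r}
    set P : ℝ := 2 ^ (5 * r) with hP
    have hPpos : (0:ℝ) < P := by positivity
    have hpow : (2:ℝ) ^ (10 * r) = P * P := by rw [hP, ← pow_add]; congr 1; ring
    have hcast : ((5 * r : ℕ) : ℝ) = 5 * (r : ℝ) := by push_cast; ring
    have hp5 : (2:ℝ) ^ (-(5 * r : ℝ)) = 1 / P := by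
      rw [Real.rpow_neg (by norm_num), ← hcast, Real.rpow_natCast, one_div, hP]
    have hsplit : (2:ℝ) ^ ((10 * r : ℝ) - c) = 2 ^ (10 * r) * 2 ^ (-c) := by
      rw [sub_eq_add_neg, Real.rpow_add (by norm_num : (0:ℝ) < 2)]
      congr 1
      rw [← Real.rpow_natCast 2 (10 * r)]
      push_cast; ring_nf
    have haux : ((∑ i ∈ Finset.range r, ((10 * r).choose i) : ℕ) : ℝ) ≤ P := by
      rw [hP]; exact_mod_cast aux_natbound r
    push_cast at haux
    have h : P * P * 2 ^ (-c) ≤ P + τ * (P * P) := by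
      rw [← hpow]
      have := hsplit ▸ h𝒜
      linarith [hsum, haux]
    have hx : (2:ℝ) ^ (-c) ≤ (P + τ * (P * P)) / (P * P) :=
      (le_div_iff₀ (by positivity)).2 (by linarith)
    have heq : (P + τ * (P * P)) / (P * P) = 1 / P + τ := by field_simp
    rw [hp5]
    linarith [hx, heq ▸ hx]
  · -- 1 - c log 2 ≤ 2^{-c}
    have h := Real.add_one_le_exp (-(c * Real.log 2))
    have h2 : (2:ℝ) ^ (-c) = Real.exp (Real.log 2 * (-c)) :=
      Real.rpow_def_of_pos (by norm_num) (-c)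
    rw [h2]
    have : Real.log 2 * (-c) = -(c * Real.log 2) := by ring
    rw [this]
    linarith
end
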